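/- (Energy conservation, k = −1 TRW.) Let δ = ±1, κ ≠ 0, let a : ℝ → ℝ be positive and twice differentiable, ρ, p : ℝ → ℝ differentiable, F : ℝ → ℝ twice differentiable, and set B(t) := ȧ/a + δ/a and T(t) := 6 B(t)². If for all t the field equations −F(T)/2 + 6 F'(T)(ȧ/a) B = κρ and F(T) − 6 F'(T)(ä/a + B²) − 6 F''(T) Ṫ B = κ(ρ + 3p) hold, then ρ̇ = −3(ȧ/a)(ρ + p) for all t. -/

import Mathlib

/-!
STATEMENT 10 (Energy conservation, k = −1 TRW): with B = ȧ/a + δ/a and T = 6B²,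
the two F(T) field equations imply ρ̇ = −3(ȧ/a)(ρ + p).
-/

theorem energy_conservation_k_neg_one
    (δ κ : ℝ) (hδ : δ = 1 ∨ δ = -1) (hκ : κ ≠ 0)
    (a ρ p F : ℝ → ℝ)
    (hapos : ∀ t, 0 < a t)
    (ha : Differentiable ℝ a) (ha' : Differentiable ℝ (deriv a))
    (hρ : Differentiable ℝ ρ) (hp : Differentiable ℝ p)
    (hF : Differentiable ℝ F) (hF' : Differentiable ℝ (deriv F))
    (B : ℝ → ℝ) (hB : ∀ t, B t = deriv a t / a t + δ / a t)
    (T : ℝ → ℝ) (hT : ∀ t, T t = 6 * (B t) ^ 2)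
    (feq1 : ∀ t, -(F (T t)) / 2
        + 6 * deriv F (T t) * (deriv a t / a t) * B t = κ * ρ t)
    (feq2 : ∀ t, F (T t)
        - 6 * deriv F (T t) * (deriv (deriv a) t / a t + (B t) ^ 2)
        - 6 * deriv (deriv F) (T t) * deriv T t * B t = κ * (ρ t + 3 * p t)) :
    ∀ t, deriv ρ t = -3 * (deriv a t / a t) * (ρ t + p t) := by
  intro t
  have hane : a t ≠ 0 := (hapos t).ne'
  have hBe : B = fun s => deriv a s / a s + δ / a s := funext hB
  have hTe : T = fun s => 6 * B s ^ 2 := funext hT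
  have haA : HasDerivAt a (deriv a t) t := (ha t).hasDerivAt
  have haA' : HasDerivAt (deriv a) (deriv (deriv a) t) t := (ha' t).hasDerivAt
  have hHd : HasDerivAt (fun s => deriv a s / a s)
      ((deriv (deriv a) t * a t - deriv a t * deriv a t) / a t ^ 2) t :=
    haA'.div haA hane
  have hBd : HasDerivAt B
      ((deriv (deriv a) t * a t - deriv a t * deriv a t) / a t ^ 2
        - δ * deriv a t / a t ^ 2) t := by
    rw [hBe]
    have h2 : HasDerivAt (fun s => δ / a s) ((0 * a t - δ * deriv a t) / a t ^ 2) t :=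
      (hasDerivAt_const t δ).div haA hane
    refine (hHd.add h2).congr_deriv ?_
    ring
  have hTd : HasDerivAt T
      (12 * B t * ((deriv (deriv a) t * a t - deriv a t * deriv a t) / a t ^ 2
        - δ * deriv a t / a t ^ 2)) t := by
    rw [hTe]
    refine ((hBd.pow 2).const_mul 6).congr_deriv ?_
    push_cast
    ring
  have hFT : HasDerivAt (fun s => F (T s))
      (deriv F (T t) * (12 * B t * ((deriv (deriv a) t * a t - deriv a t * deriv a t) / a t ^ 2
        - δ * deriv a t / a t ^ 2))) t :=
    ((hF (T t)).hasDerivAt).comp t hTd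
  have hFT' : HasDerivAt (fun s => deriv F (T s))
      (deriv (deriv F) (T t) * (12 * B t * ((deriv (deriv a) t * a t - deriv a t * deriv a t) / a t ^ 2
        - δ * deriv a t / a t ^ 2))) t :=
    ((hF' (T t)).hasDerivAt).comp t hTd
  have hL0 := (hFT.neg.div_const 2).add (((hFT'.const_mul 6).mul hHd).mul hBd)
  have hL := hL0.congr_of_eventuallyEq
    (Filter.Eventually.of_forall fun s => ((feq1 s).symm : κ * ρ s = _))
  have hk := ((hρ t).hasDerivAt.const_mul κ).unique hL
  have e1 := feq1 t
  have e2 := feq2 t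
  rw [hTd.deriv] at e2
  have hp' : κ * p t = ((F (T t)
      - 6 * deriv F (T t) * (deriv (deriv a) t / a t + (B t) ^ 2)
      - 6 * deriv (deriv F) (T t) * (12 * B t * ((deriv (deriv a) t * a t - deriv a t * deriv a t) / a t ^ 2
        - δ * deriv a t / a t ^ 2)) * B t)
      - (-(F (T t)) / 2 + 6 * deriv F (T t) * (deriv a t / a t) * B t)) / 3 := by
    linarith [e1, e2]
  apply mul_left_cancel₀ hκ
  rw [hk]
  have hrhs : κ * (-3 * (deriv a t / a t) * (ρ t + p t))
      = -3 * (deriv a t / a t) * (κ * ρ t + κ * p t) := by ring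
  rw [hrhs, ← e1, hp']
  rw [hB t]
  simp only [Pi.mul_apply]
  field_simp
  ring
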